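/- Consider the non-Euclidean composite gradient iteration, and assume in addition that ρ and f are twice continuously differentiable, that μ·D²ρ(x)[u,u] ≤ D²h(x)[u,u] ≤ L·D²ρ(x)[u,u] for all x, u ∈ E, that ρ is uniformly convex of degree p+1 with modulus σ > 0 (i.e., β_ρ(x, y') ≥ (σ/(p+1))·‖y' − x‖^{p+1} for all x, y' ∈ E), and that the operator norm of the second derivative satisfies ‖D²ρ(x)‖ ≤ L̄ for all x ∈ E. For i ≥ 0 set g_{i+1} = 2L(∇ρ(z_i) − ∇ρ(z_{i+1})) − ∇h(z_i). Then for every i ≥ 0: φ(z_i) − φ(z_{i+1}) ≥ C·‖∇h(z_{i+1}) + g_{i+1}‖^{p+1}, where C = L·σ / ((p+1)·(2L − μ)^{p+1}·L̄^{p+1}). -/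

import Mathlib

set_option synthInstance.maxHeartbeats 1000000
set_option maxHeartbeats 1000000

open scoped RealInnerProductSpace Topology
open Filter


-- derivative of x ↦ ‖x‖ ^ n for n ≥ 2
private lemma normpow_hasFDerivAt {E : Type*} [NormedAddCommGroup E] [InnerProductSpace ℝ E]
    (n : ℕ) (hn : 2 ≤ n) (x : E) :
    HasFDerivAt (fun w : E => ‖w‖ ^ n)
      ((((n : ℝ) / 2) * ‖x‖ ^ (n - 2)) • (2 • innerSL ℝ x)) x := by
  have h2 : HasFDerivAt (fun w : E => ‖w‖ ^ 2) (2 • innerSL ℝ x) x :=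
    (hasStrictFDerivAt_norm_sq x).hasFDerivAt
  have hc : (1 : ℝ) ≤ (n : ℝ) / 2 := by
    have : (2 : ℝ) ≤ (n : ℝ) := by exact_mod_cast hn
    linarith
  have h3 := h2.rpow_const (p := (n : ℝ) / 2) (Or.inr hc)
  have hfun : (fun w : E => (‖w‖ ^ 2 : ℝ) ^ ((n : ℝ) / 2)) = fun w : E => ‖w‖ ^ n := by
    funext w
    rw [← Real.rpow_natCast ‖w‖ 2, ← Real.rpow_natCast ‖w‖ n, ← Real.rpow_mul (norm_nonneg w)]
    congr 1
    push_cast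
    ring
  have hsc : ((‖x‖ ^ 2 : ℝ)) ^ ((n : ℝ) / 2 - 1) = ‖x‖ ^ (n - 2) := by
    rw [← Real.rpow_natCast ‖x‖ 2, ← Real.rpow_natCast ‖x‖ (n - 2),
      ← Real.rpow_mul (norm_nonneg x)]
    congr 1
    push_cast [Nat.cast_sub hn]
    ring
  rw [hfun] at h3
  rwa [hsc] at h3


private lemma D2_diff {E : Type*} [NormedAddCommGroup E] [InnerProductSpace ℝ E] :
    Differentiable ℝ (fun x : E => (2 • innerSL ℝ x : E →L[ℝ] ℝ)) := by
  have h1 : (fun x : E => (2 • innerSL ℝ x : E →L[ℝ] ℝ))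
      = fun x => fderiv ℝ (fun w : E => ‖w‖ ^ 2) x :=
    funext fun x => ((hasStrictFDerivAt_norm_sq x).hasFDerivAt.fderiv).symm
  rw [h1]
  exact ((contDiff_norm_sq (𝕜 := ℝ) (n := 2)).fderiv_right (m := 1) (by norm_num)).differentiable (by norm_num)

private lemma normpow_deriv_diff {E : Type*} [NormedAddCommGroup E] [InnerProductSpace ℝ E]
    (n : ℕ) (hn : 2 ≤ n) :
    Differentiable ℝ
      (fun x : E => ((((n : ℝ) / 2) * ‖x‖ ^ (n - 2)) • (2 • innerSL ℝ x) : E →L[ℝ] ℝ)) := by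
  rcases Nat.eq_or_lt_of_le hn with h2 | h3
  · subst h2
    simp only [Nat.sub_self, pow_zero, mul_one]
    exact D2_diff.fun_const_smul _
  · intro x
    by_cases hx : x = (0 : E)
    · subst hx
      have key : HasFDerivAt (𝕜 := ℝ)
          (fun x : E => ((((n : ℝ) / 2) * ‖x‖ ^ (n - 2)) • (2 • innerSL ℝ x) : E →L[ℝ] ℝ))
          0 0 := by
        rw [hasFDerivAt_iff_isLittleO_nhds_zero]
        simp only [zero_add, map_zero, smul_zero, sub_zero, ContinuousLinearMap.zero_apply]
        rw [Asymptotics.isLittleO_iff]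
        intro ε hε
        have hk0 : n - 2 ≠ 0 := by omega
        have hcont : Filter.Tendsto (fun t : E => (n : ℝ) * ‖t‖ ^ (n - 2)) (𝓝 0) (𝓝 0) := by
          have hc : Continuous (fun t : E => (n : ℝ) * ‖t‖ ^ (n - 2)) :=
            continuous_const.mul (continuous_norm.pow (n - 2))
          have := hc.tendsto (0 : E)
          simpa [zero_pow hk0] using this
        have hev : ∀ᶠ t : E in 𝓝 0, (n : ℝ) * ‖t‖ ^ (n - 2) < ε :=
          hcont.eventually_lt_const hε
        filter_upwards [hev] with t ht
        have h2i : ‖(2 • innerSL ℝ t : E →L[ℝ] ℝ)‖ ≤ 2 * ‖t‖ := by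
          rw [two_smul]
          calc ‖(innerSL ℝ t + innerSL ℝ t : E →L[ℝ] ℝ)‖
              ≤ ‖(innerSL ℝ t : E →L[ℝ] ℝ)‖ + ‖(innerSL ℝ t : E →L[ℝ] ℝ)‖ := norm_add_le _ _
            _ = 2 * ‖t‖ := by rw [innerSL_apply_norm]; ring
        have h1 : ‖((((n : ℝ) / 2) * ‖t‖ ^ (n - 2)) • (2 • innerSL ℝ t) : E →L[ℝ] ℝ)‖
            ≤ (((n : ℝ) / 2) * ‖t‖ ^ (n - 2)) * (2 * ‖t‖) := by
          calc ‖((((n : ℝ) / 2) * ‖t‖ ^ (n - 2)) • (2 • innerSL ℝ t) : E →L[ℝ] ℝ)‖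
              ≤ ‖(((n : ℝ) / 2) * ‖t‖ ^ (n - 2))‖ * ‖(2 • innerSL ℝ t : E →L[ℝ] ℝ)‖ :=
                norm_smul_le _ _
            _ ≤ (((n : ℝ) / 2) * ‖t‖ ^ (n - 2)) * (2 * ‖t‖) := by
                rw [Real.norm_eq_abs, abs_of_nonneg (by positivity)]
                exact mul_le_mul_of_nonneg_left h2i (by positivity)
        have ht' : (0 : ℝ) ≤ ‖t‖ := norm_nonneg t
        nlinarith [pow_nonneg (norm_nonneg t) (n - 2)]
      exact key.differentiableAt
    · have hnorm : DifferentiableAt ℝ (fun w : E => ‖w‖) x :=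
        DifferentiableAt.norm ℝ differentiableAt_fun_id hx
      exact ((differentiableAt_const _).mul (hnorm.pow _)).smul (D2_diff x)


private lemma bilin_opnorm_le {E : Type*} [NormedAddCommGroup E] [InnerProductSpace ℝ E]
    {A : E →L[ℝ] E →L[ℝ] ℝ} {M : ℝ} (hM : 0 ≤ M)
    (hsymm : ∀ v w, A v w = A w v)
    (hq : ∀ u, |A u u| ≤ M * ‖u‖ ^ 2) : ‖A‖ ≤ M := by
  have key : ∀ v w : E, |A v w| ≤ M / 2 * (‖v‖ ^ 2 + ‖w‖ ^ 2) := by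
    intro v w
    have e1 : A (v + w) (v + w) - A (v - w) (v - w) = 4 * A v w := by
      have hs := hsymm v w
      simp only [map_add, map_sub, ContinuousLinearMap.add_apply,
        ContinuousLinearMap.sub_apply]
      linarith
    have h1 := hq (v + w)
    have h2 := hq (v - w)
    have hpar : ‖v + w‖ ^ 2 + ‖v - w‖ ^ 2 = 2 * (‖v‖ ^ 2 + ‖w‖ ^ 2) := by
      have hp := parallelogram_law_with_norm ℝ v w
      nlinarith [hp]
    rw [abs_le] at h1 h2 ⊢
    constructor <;> nlinarith [h1.1, h1.2, h2.1, h2.2]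
  have key2 : ∀ v w : E, |A v w| ≤ M * ‖v‖ * ‖w‖ := by
    intro v w
    by_cases hv : v = 0
    · simp [hv]
    by_cases hw : w = 0
    · simp [hw]
    have hv0 : (0 : ℝ) < ‖v‖ := norm_pos_iff.mpr hv
    have hw0 : (0 : ℝ) < ‖w‖ := norm_pos_iff.mpr hw
    set t : ℝ := Real.sqrt (‖w‖ / ‖v‖) with ht
    have htpos : 0 < t := Real.sqrt_pos.mpr (by positivity)
    have ht2 : t ^ 2 = ‖w‖ / ‖v‖ := Real.sq_sqrt (by positivity)
    have hAvw : A (t • v) (t⁻¹ • w) = A v w := by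
      rw [map_smul (A (t • v)) t⁻¹, map_smul A t]
      simp only [ContinuousLinearMap.smul_apply, smul_eq_mul]
      rw [← mul_assoc, inv_mul_cancel₀ htpos.ne', one_mul]
    have hk := key (t • v) (t⁻¹ • w)
    rw [hAvw] at hk
    have hn1 : ‖t • v‖ ^ 2 = t ^ 2 * ‖v‖ ^ 2 := by
      rw [norm_smul, Real.norm_eq_abs, mul_pow, sq_abs]
    have hn2 : ‖t⁻¹ • w‖ ^ 2 = t⁻¹ ^ 2 * ‖w‖ ^ 2 := by
      rw [norm_smul, Real.norm_eq_abs, mul_pow, sq_abs]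
    have hinv : t⁻¹ ^ 2 = ‖v‖ / ‖w‖ := by
      rw [inv_pow, ht2]
      field_simp
    have : ‖t • v‖ ^ 2 + ‖t⁻¹ • w‖ ^ 2 = 2 * (‖v‖ * ‖w‖) := by
      rw [hn1, hn2, ht2, hinv]
      field_simp
      ring
    rw [this] at hk
    calc |A v w| ≤ M / 2 * (2 * (‖v‖ * ‖w‖)) := hk
      _ = M * ‖v‖ * ‖w‖ := by ring
  refine A.opNorm_le_bound hM fun v => ?_
  refine (A v).opNorm_le_bound (by positivity) fun w => ?_
  calc ‖A v w‖ ≤ M * ‖v‖ * ‖w‖ := by rw [Real.norm_eq_abs]; exact key2 v w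
    _ = M * ‖v‖ * ‖w‖ := rfl

theorem stmt11 {E : Type*} [NormedAddCommGroup E] [InnerProductSpace ℝ E]
    [FiniteDimensional ℝ E]
    (s : Set E) (hs : s.Nonempty) (hsconv : Convex ℝ s)
    (ψ : E → ℝ) (hψ : ConvexOn ℝ s ψ)
    (f : E → ℝ) (f' : E → E) (hf' : ∀ x, HasGradientAt f (f' x) x)
    (hfconv : ConvexOn ℝ Set.univ f)
    (p : ℕ) (hp : 1 ≤ p)
    (y : E) (hy : y ∈ s) (H : ℝ) (hH : 0 < H)
    (h : E → ℝ) (hhdef : ∀ z, h z = f z + H * (‖z - y‖ ^ (p + 1) / (p + 1)))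
    (h' : E → E) (hh' : ∀ x, HasGradientAt h (h' x) x)
    (φ : E → ℝ) (hφ : ∀ z, φ z = h z + ψ z)
    (ρ : E → ℝ) (ρ' : E → E) (hρ' : ∀ x, HasGradientAt ρ (ρ' x) x)
    (hρconv : ConvexOn ℝ Set.univ ρ)
    (Br : E → E → ℝ) (hBr : ∀ x w, Br x w = ρ w - ρ x - ⟪ρ' x, w - x⟫)
    (L μ : ℝ) (hμ : 0 < μ) (hμL : μ ≤ L)
    (hrel : ∀ x w, μ * Br x w ≤ h w - h x - ⟪h' x, w - x⟫ ∧
        h w - h x - ⟪h' x, w - x⟫ ≤ L * Br x w)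
    (z : ℕ → E) (hz0 : z 0 = y)
    (hzs : ∀ i, z (i + 1) ∈ s)
    (hzmin : ∀ i : ℕ, ∀ w ∈ s,
        ⟪h' (z i), z (i + 1) - z i⟫ + ψ (z (i + 1)) + 2 * L * Br (z i) (z (i + 1))
          ≤ ⟪h' (z i), w - z i⟫ + ψ w + 2 * L * Br (z i) w)
    (hρC2 : ContDiff ℝ 2 ρ) (hfC2 : ContDiff ℝ 2 f)
    (hsand : ∀ x u : E,
        μ * iteratedFDeriv ℝ 2 ρ x (fun _ => u) ≤ iteratedFDeriv ℝ 2 h x (fun _ => u) ∧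
        iteratedFDeriv ℝ 2 h x (fun _ => u) ≤ L * iteratedFDeriv ℝ 2 ρ x (fun _ => u))
    (σ : ℝ) (hσ : 0 < σ)
    (hunif : ∀ x w : E, Br x w ≥ σ / (p + 1) * ‖w - x‖ ^ (p + 1))
    (Lbar : ℝ) (hLbar : ∀ x : E, ‖iteratedFDeriv ℝ 2 ρ x‖ ≤ Lbar)
    (gs : ℕ → E)
    (hgs : ∀ i : ℕ, gs (i + 1) = (2 * L) • (ρ' (z i) - ρ' (z (i + 1))) - h' (z i)) :
    ∀ i : ℕ, φ (z i) - φ (z (i + 1)) ≥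
      L * σ / ((p + 1) * (2 * L - μ) ^ (p + 1) * Lbar ^ (p + 1)) *
        ‖h' (z (i + 1)) + gs (i + 1)‖ ^ (p + 1) := by
  have hL : (0 : ℝ) < L := lt_of_lt_of_le hμ hμL
  have hLbar0 : (0 : ℝ) ≤ Lbar := le_trans (norm_nonneg _) (hLbar 0)
  have hn : 2 ≤ p + 1 := by omega
  have hzmem : ∀ i, z i ∈ s := by
    intro i
    cases i with
    | zero => rw [hz0]; exact hy
    | succ j => exact hzs j
  -- rewrite h in a convenient form
  have hfun : h = fun x => f x + (H / ((p : ℝ) + 1)) * ‖x - y‖ ^ (p + 1) := by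
    funext x
    rw [hhdef x]
    push_cast
    ring
  have hf_diff : Differentiable ℝ f := hfC2.differentiable (by norm_num)
  have hρ_diff : Differentiable ℝ ρ := hρC2.differentiable (by norm_num)
  -- explicit derivative of h
  have hNder : ∀ x : E, HasFDerivAt (fun w : E => ‖w - y‖ ^ (p + 1))
      (((((p : ℝ) + 1) / 2) * ‖x - y‖ ^ (p + 1 - 2)) • (2 • innerSL ℝ (x - y))) x := by
    intro x
    have h0 := normpow_hasFDerivAt (p + 1) hn (x - y)
    have h1 := h0.comp x ((hasFDerivAt_id x).sub_const y)
    simpa [Function.comp_def] using h1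
  have hDh : ∀ x : E, HasFDerivAt h
      (fderiv ℝ f x + (H / ((p : ℝ) + 1)) •
        ((((p : ℝ) + 1) / 2 * ‖x - y‖ ^ (p + 1 - 2)) • (2 • innerSL ℝ (x - y)))) x := by
    intro x
    rw [hfun]
    exact ((hf_diff x).hasFDerivAt).add ((hNder x).const_mul (H / ((p : ℝ) + 1)))
  have hh_diff : Differentiable ℝ h := fun x => (hDh x).differentiableAt
  have hfderivh : (fun x => fderiv ℝ h x)
      = fun x => fderiv ℝ f x + (H / ((p : ℝ) + 1)) •
        ((((p : ℝ) + 1) / 2 * ‖x - y‖ ^ (p + 1 - 2)) • (2 • innerSL ℝ (x - y))) :=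
    funext fun x => (hDh x).fderiv
  have hDh_diff : Differentiable ℝ (fun x => fderiv ℝ h x) := by
    rw [hfderivh]
    apply Differentiable.add
    · exact (hfC2.fderiv_right (m := 1) (by norm_num)).differentiable (by norm_num)
    · apply Differentiable.fun_const_smul
      have hbase := normpow_deriv_diff (E := E) (p + 1) hn
      have heq : (fun x : E => ((((p : ℝ) + 1) / 2) * ‖x - y‖ ^ (p + 1 - 2)) •
            (2 • innerSL ℝ (x - y)))
          = (fun x : E => ((((p + 1 : ℕ) : ℝ)) / 2 * ‖x‖ ^ (p + 1 - 2)) • (2 • innerSL ℝ x)) ∘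
            (fun x : E => x - y) := by
        funext x
        have hc : ((p + 1 : ℕ) : ℝ) = (p : ℝ) + 1 := by push_cast; ring
        simp [Function.comp, hc]
      rw [heq]
      exact hbase.comp (differentiable_fun_id.sub_const y)
  have hDρ_diff : Differentiable ℝ (fderiv ℝ ρ) :=
    (hρC2.fderiv_right (m := 1) (by norm_num)).differentiable (by norm_num)
  -- the map W = ∇(2Lρ - h) on the dual side
  set W : E → (E →L[ℝ] ℝ) := fun x => (2 * L) • fderiv ℝ ρ x - fderiv ℝ h x with hW_def
  have hW_diff : Differentiable ℝ W := (hDρ_diff.const_smul (2 * L)).sub hDh_diff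
  have hq : ∀ w : E, HasFDerivAt (fun x => 2 * L * ρ x - h x) (W w) w := fun w =>
    ((hρ_diff w).hasFDerivAt.const_mul (2 * L)).sub (hh_diff w).hasFDerivAt
  have hA_symm : ∀ x u v : E, fderiv ℝ W x u v = fderiv ℝ W x v u := fun x u v =>
    second_derivative_symmetric hq (hW_diff x).hasFDerivAt u v
  have hAquad : ∀ x u : E, fderiv ℝ W x u u
      = 2 * L * (iteratedFDeriv ℝ 2 ρ x (fun _ => u)) - iteratedFDeriv ℝ 2 h x (fun _ => u) := by
    intro x u
    have hWf : fderiv ℝ W x = (2 * L) • fderiv ℝ (fderiv ℝ ρ) x - fderiv ℝ (fderiv ℝ h) x := by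
      rw [hW_def]
      rw [fderiv_fun_sub ((hDρ_diff.fun_const_smul (2 * L)) x) (hDh_diff x),
        fderiv_fun_const_smul (hDρ_diff x)]
    have hitρ : iteratedFDeriv ℝ 2 ρ x (fun _ => u) = fderiv ℝ (fderiv ℝ ρ) x u u := by
      rw [iteratedFDeriv_two_apply]
    have hith : iteratedFDeriv ℝ 2 h x (fun _ => u) = fderiv ℝ (fderiv ℝ h) x u u := by
      rw [iteratedFDeriv_two_apply]
    rw [hWf, hitρ, hith]
    simp [ContinuousLinearMap.sub_apply, ContinuousLinearMap.smul_apply, smul_eq_mul]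
  have hM0 : (0 : ℝ) ≤ (2 * L - μ) * Lbar := mul_nonneg (by linarith) hLbar0
  have hAle : ∀ x : E, ‖fderiv ℝ W x‖ ≤ (2 * L - μ) * Lbar := by
    intro x
    apply bilin_opnorm_le hM0 (fun v w => hA_symm x v w)
    intro u
    have hρb : |iteratedFDeriv ℝ 2 ρ x (fun _ => u)| ≤ Lbar * ‖u‖ ^ 2 := by
      have h1 := (iteratedFDeriv ℝ 2 ρ x).le_opNorm (fun _ => u)
      have h2 : (∏ i : Fin 2, ‖(fun _ : Fin 2 => u) i‖) = ‖u‖ ^ 2 := by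
        simp [Fin.prod_univ_two, sq]
      rw [h2] at h1
      calc |iteratedFDeriv ℝ 2 ρ x (fun _ => u)|
          = ‖iteratedFDeriv ℝ 2 ρ x (fun _ => u)‖ := (Real.norm_eq_abs _).symm
        _ ≤ ‖iteratedFDeriv ℝ 2 ρ x‖ * ‖u‖ ^ 2 := h1
        _ ≤ Lbar * ‖u‖ ^ 2 := by nlinarith [hLbar x, sq_nonneg ‖u‖]
    have hs1 := (hsand x u).1
    have hs2 := (hsand x u).2
    rw [hAquad x u, abs_le]
    rw [abs_le] at hρb
    have hfact1 : (0 : ℝ) ≤ (L - μ) * (Lbar * ‖u‖ ^ 2) := by nlinarith [sq_nonneg ‖u‖]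
    constructor
    · nlinarith [mul_le_mul_of_nonneg_left hρb.1 hL.le, hs2, hfact1]
    · nlinarith [mul_le_mul_of_nonneg_left hρb.2 (by linarith : (0:ℝ) ≤ 2 * L - μ), hs1]
  have hlip : ∀ a b : E, ‖W b - W a‖ ≤ ((2 * L - μ) * Lbar) * ‖b - a‖ := by
    intro a b
    exact Convex.norm_image_sub_le_of_norm_fderiv_le
      (fun x _ => hW_diff x) (fun x _ => hAle x)
      convex_univ (Set.mem_univ a) (Set.mem_univ b)
  -- translate to gradients
  have hWV : ∀ x : E, W x = InnerProductSpace.toDual ℝ E ((2 * L) • ρ' x - h' x) := by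
    intro x
    have e1 : fderiv ℝ ρ x = InnerProductSpace.toDual ℝ E (ρ' x) := ((hρ' x).hasFDerivAt).fderiv
    have e2 : fderiv ℝ h x = InnerProductSpace.toDual ℝ E (h' x) := ((hh' x).hasFDerivAt).fderiv
    simp only [hW_def]
    rw [e1, e2, map_sub]
    congr 1
    simp [map_smulₛₗ, starRingEnd_apply, star_trivial]
  have hlipV : ∀ a b : E, ‖((2 * L) • ρ' a - h' a) - ((2 * L) • ρ' b - h' b)‖
      ≤ ((2 * L - μ) * Lbar) * ‖a - b‖ := by
    intro a b
    have e3 : W a - W b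
        = InnerProductSpace.toDual ℝ E (((2 * L) • ρ' a - h' a) - ((2 * L) • ρ' b - h' b)) := by
      rw [hWV a, hWV b, ← map_sub]
    calc ‖((2 * L) • ρ' a - h' a) - ((2 * L) • ρ' b - h' b)‖
        = ‖W a - W b‖ := by rw [e3, LinearIsometryEquiv.norm_map]
      _ ≤ ((2 * L - μ) * Lbar) * ‖a - b‖ := hlip b a
  -- main estimate per iteration
  intro i
  have hstep := hzmin i (z i) (hzmem i)
  have hBr0 : Br (z i) (z i) = 0 := by rw [hBr]; simp
  rw [hBr0, sub_self, inner_zero_right] at hstep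
  have hrel2 := (hrel (z i) (z (i + 1))).2
  have hB := hunif (z i) (z (i + 1))
  have hdrop2 : φ (z i) - φ (z (i + 1))
      ≥ L * (σ / ((p : ℝ) + 1) * ‖z (i + 1) - z i‖ ^ (p + 1)) := by
    have hd1 : φ (z i) - φ (z (i + 1)) ≥ L * Br (z i) (z (i + 1)) := by
      rw [hφ (z i), hφ (z (i + 1))]
      linarith
    have hd2 := mul_le_mul_of_nonneg_left hB hL.le
    push_cast at hd2
    linarith
  have hGeq : h' (z (i + 1)) + gs (i + 1)
      = ((2 * L) • ρ' (z i) - h' (z i)) - ((2 * L) • ρ' (z (i + 1)) - h' (z (i + 1))) := by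
    rw [hgs i]
    module
  have hGnorm : ‖h' (z (i + 1)) + gs (i + 1)‖
      ≤ ((2 * L - μ) * Lbar) * ‖z (i + 1) - z i‖ := by
    rw [hGeq]
    calc ‖((2 * L) • ρ' (z i) - h' (z i)) - ((2 * L) • ρ' (z (i + 1)) - h' (z (i + 1)))‖
        ≤ ((2 * L - μ) * Lbar) * ‖z i - z (i + 1)‖ := hlipV (z i) (z (i + 1))
      _ = ((2 * L - μ) * Lbar) * ‖z (i + 1) - z i‖ := by rw [norm_sub_rev]
  by_cases hLb : Lbar = 0
  · have hG0 : ‖h' (z (i + 1)) + gs (i + 1)‖ = 0 := by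
      refine le_antisymm ?_ (norm_nonneg _)
      have := hGnorm
      rw [hLb] at this
      simpa using this
    rw [hG0, zero_pow (by omega : p + 1 ≠ 0), mul_zero]
    have hpow : (0 : ℝ) ≤ ‖z (i + 1) - z i‖ ^ (p + 1) := by positivity
    have hx0 : (0 : ℝ) ≤ L * (σ / ((p : ℝ) + 1) * ‖z (i + 1) - z i‖ ^ (p + 1)) := by positivity
    linarith
  · have hLbpos : 0 < Lbar := lt_of_le_of_ne hLbar0 (Ne.symm hLb)
    have h2Lμ : (0 : ℝ) < 2 * L - μ := by linarith
    have hGp : ‖h' (z (i + 1)) + gs (i + 1)‖ ^ (p + 1)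
        ≤ (((2 * L - μ) * Lbar) * ‖z (i + 1) - z i‖) ^ (p + 1) :=
      pow_le_pow_left₀ (norm_nonneg _) hGnorm _
    have hc : (0 : ℝ) < L * σ / (((p : ℝ) + 1) * (2 * L - μ) ^ (p + 1) * Lbar ^ (p + 1)) := by
      positivity
    have hkey : L * σ / (((p : ℝ) + 1) * (2 * L - μ) ^ (p + 1) * Lbar ^ (p + 1)) *
        ((((2 * L - μ) * Lbar) * ‖z (i + 1) - z i‖) ^ (p + 1))
        = L * (σ / ((p : ℝ) + 1) * ‖z (i + 1) - z i‖ ^ (p + 1)) := by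
      rw [mul_pow, mul_pow]
      have hne1 : ((p : ℝ) + 1) ≠ 0 := by positivity
      have hne2 : (2 * L - μ) ^ (p + 1) ≠ 0 := by positivity
      have hne3 : Lbar ^ (p + 1) ≠ 0 := by positivity
      rw [div_mul_eq_mul_div, div_eq_iff (mul_ne_zero (mul_ne_zero hne1 hne2) hne3)]
      linear_combination (-(L * σ * (2 * L - μ) ^ (p + 1) * Lbar ^ (p + 1) *
        ‖z (i + 1) - z i‖ ^ (p + 1))) * mul_inv_cancel₀ hne1
    calc L * σ / (((p : ℝ) + 1) * (2 * L - μ) ^ (p + 1) * Lbar ^ (p + 1)) *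
          ‖h' (z (i + 1)) + gs (i + 1)‖ ^ (p + 1)
        ≤ L * σ / (((p : ℝ) + 1) * (2 * L - μ) ^ (p + 1) * Lbar ^ (p + 1)) *
          ((((2 * L - μ) * Lbar) * ‖z (i + 1) - z i‖) ^ (p + 1)) :=
          mul_le_mul_of_nonneg_left hGp hc.le
      _ = L * (σ / ((p : ℝ) + 1) * ‖z (i + 1) - z i‖ ^ (p + 1)) := hkey
      _ ≤ φ (z i) - φ (z (i + 1)) := hdrop2
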